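/- For each noncentral element x of G = A(n,θ), the set [x,G] = {[x,g] : g ∈ G} is a subgroup of Z(G) of index 2 in Z(G) (a hyperplane of Z(G) viewed as an F_2-vector space). -/

import Mathlib

noncomputable section

abbrev Fq (n : ℕ) : Type := GaloisField 2 n

instance (n : ℕ) : Fintype (Fq n) := Fintype.ofFinite _

@[ext] structure SuzukiA (n : ℕ) (θ : Fq n ≃+* Fq n) where
  a : Fq n
  b : Fq n

namespace SuzukiA

variable {n : ℕ} {θ : Fq n ≃+* Fq n}

instance : Mul (SuzukiA n θ) := ⟨fun x y => ⟨x.a + y.a, x.b + y.b + x.a * θ y.a⟩⟩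
instance : One (SuzukiA n θ) := ⟨⟨0, 0⟩⟩
instance : Inv (SuzukiA n θ) := ⟨fun x => ⟨x.a, x.b + x.a * θ x.a⟩⟩

theorem mul_def (x y : SuzukiA n θ) :
    x * y = ⟨x.a + y.a, x.b + y.b + x.a * θ y.a⟩ := rfl

@[simp] theorem one_a : (1 : SuzukiA n θ).a = 0 := rfl
@[simp] theorem one_b : (1 : SuzukiA n θ).b = 0 := rfl

instance : Group (SuzukiA n θ) where
  mul_assoc x y z := by ext <;> simp [mul_def, map_add] <;> ring
  one_mul x := by ext <;> simp [mul_def]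
  mul_one x := by ext <;> simp [mul_def]
  inv_mul_cancel x := by
    have h2 : (2 : Fq n) = 0 := by
      have := CharP.cast_eq_zero (Fq n) 2
      exact_mod_cast this
    show (⟨x.a, x.b + x.a * θ x.a⟩ * x : SuzukiA n θ) = 1
    ext
    · show x.a + x.a = 0
      linear_combination x.a * h2
    · show x.b + x.a * θ x.a + x.b + x.a * θ x.a = 0
      linear_combination (x.b + x.a * θ x.a) * h2

instance : Fintype (SuzukiA n θ) :=
  Fintype.ofEquiv (Fq n × Fq n)
    { toFun := fun p => ⟨p.1, p.2⟩
      invFun := fun x => (x.a, x.b)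
      left_inv := fun _ => rfl
      right_inv := fun _ => rfl }

end SuzukiA


namespace SuzukiAProof

open SuzukiA

variable {n : ℕ} {θ : Fq n ≃+* Fq n}

theorem inv_def (x : SuzukiA n θ) : x⁻¹ = ⟨x.a, x.b + x.a * θ x.a⟩ := rfl

theorem two_eq_zero : (2 : Fq n) = 0 := by
  have := CharP.cast_eq_zero (Fq n) 2
  exact_mod_cast this

theorem comm_eq (x g : SuzukiA n θ) :
    x⁻¹ * g⁻¹ * x * g = ⟨0, x.a * θ g.a + g.a * θ x.a⟩ := by
  have h2 : (2 : Fq n) = 0 := two_eq_zero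
  ext
  · show x.a + g.a + x.a + g.a = 0
    linear_combination (x.a + g.a) * h2
  · show x.b + x.a * θ x.a + (g.b + g.a * θ g.a) + x.a * θ g.a + x.b +
      (x.a + g.a) * θ x.a + g.b + (x.a + g.a + x.a) * θ g.a = x.a * θ g.a + g.a * θ x.a
    linear_combination (x.b + g.b + x.a * θ x.a + g.a * θ g.a + x.a * θ g.a) * h2

/-- fixed points of θ are 0 or 1 -/
theorem fixed_eq (hθ : ∀ σ : Fq n ≃+* Fq n, σ ∈ Subgroup.zpowers θ)
    (t : Fq n) (ht : θ t = t) : t = 0 ∨ t = 1 := by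
  have key : ∀ m : ℤ, (θ ^ m) t = t := by
    intro m
    induction m using Int.induction_on with
    | zero => rfl
    | succ k ih => rw [zpow_add_one]; show (θ ^ (k:ℤ)) (θ t) = t; rw [ht, ih]
    | pred k ih =>
      rw [zpow_sub_one]
      have hi : θ⁻¹ t = t := θ.injective
        (by show θ (θ.symm t) = θ t; rw [RingEquiv.apply_symm_apply, ht])
      show (θ ^ (-k:ℤ)) (θ⁻¹ t) = t
      rw [hi, ih]
  obtain ⟨k, hk⟩ := hθ (frobeniusEquiv (Fq n) 2)
  have hfr : t ^ 2 = t := by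
    have h1 := key k
    have h2' : (θ ^ k) t = frobeniusEquiv (Fq n) 2 t := by rw [show θ ^ k = frobeniusEquiv (Fq n) 2 from hk]
    rw [h2'] at h1
    simpa [frobeniusEquiv_apply, frobenius_def] using h1
  have h2 : (2 : Fq n) = 0 := two_eq_zero
  have : t * (t + 1) = 0 := by linear_combination hfr + t * h2
  rcases mul_eq_zero.mp this with h | h
  · exact Or.inl h
  · right; linear_combination h - h2

theorem exists_not_fixed (hn : 1 < n) (hθ : ∀ σ : Fq n ≃+* Fq n, σ ∈ Subgroup.zpowers θ) :
    ∃ t : Fq n, θ t ≠ t := by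
  by_contra h
  push_neg at h
  have h01 : ∀ t : Fq n, t = 0 ∨ t = 1 := fun t => fixed_eq hθ t (h t)
  have hsurj : Function.Surjective (fun b : Bool => if b then (1 : Fq n) else 0) := by
    intro t
    rcases h01 t with ht | ht
    · exact ⟨false, ht.symm⟩
    · exact ⟨true, ht.symm⟩
  have hcard := Fintype.card_le_of_surjective _ hsurj
  have hF : Nat.card (Fq n) = 2 ^ n := GaloisField.card 2 n (by omega)
  rw [Nat.card_eq_fintype_card] at hF
  rw [hF, Fintype.card_bool] at hcard
  have : 2 ^ 2 ≤ 2 ^ n := Nat.pow_le_pow_right (by norm_num) hn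
  omega

/-- the additive map c ↦ a θ(c) + c θ(a) -/
def phi (a : Fq n) : Fq n →+ Fq n where
  toFun c := a * θ c + c * θ a
  map_zero' := by simp
  map_add' c d := by simp only [map_add]; ring

@[simp] theorem phi_apply (a c : Fq n) : phi (θ := θ) a c = a * θ c + c * θ a := rfl

theorem mem_comm_set_iff (x z : SuzukiA n θ) :
    (∃ g, z = x⁻¹ * g⁻¹ * x * g) ↔ ∃ c : Fq n, z = ⟨0, phi (θ := θ) x.a c⟩ := by
  constructor
  · rintro ⟨g, rfl⟩
    exact ⟨g.a, comm_eq x g⟩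
  · rintro ⟨c, rfl⟩
    exact ⟨⟨c, 0⟩, (comm_eq x ⟨c, 0⟩).symm⟩

/-- the commutator set as a subgroup -/
def Hsub (x : SuzukiA n θ) : Subgroup (SuzukiA n θ) where
  carrier := {z : SuzukiA n θ | ∃ g, z = x⁻¹ * g⁻¹ * x * g}
  one_mem' := by
    rw [Set.mem_setOf_eq, mem_comm_set_iff]
    exact ⟨0, by ext <;> simp⟩
  mul_mem' := by
    intro z w hz hw
    rw [Set.mem_setOf_eq, mem_comm_set_iff] at *
    obtain ⟨c, rfl⟩ := hz
    obtain ⟨d, rfl⟩ := hw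
    refine ⟨c + d, ?_⟩
    ext
    · show (0 : Fq n) + 0 = 0; simp
    · show phi (θ := θ) x.a c + phi (θ := θ) x.a d + 0 * θ 0 = phi (θ := θ) x.a (c + d)
      simp only [phi_apply, map_add]
      ring
  inv_mem' := by
    intro z hz
    rw [Set.mem_setOf_eq, mem_comm_set_iff] at *
    obtain ⟨c, rfl⟩ := hz
    refine ⟨c, ?_⟩
    simp [inv_def]

theorem center_iff (hn : 1 < n) (hθ : ∀ σ : Fq n ≃+* Fq n, σ ∈ Subgroup.zpowers θ)
    (z : SuzukiA n θ) : z ∈ Subgroup.center (SuzukiA n θ) ↔ z.a = 0 := by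
  rw [Subgroup.mem_center_iff]
  constructor
  · intro hc
    by_contra ha
    have h2 : (2 : Fq n) = 0 := two_eq_zero
    obtain ⟨t, ht⟩ := exists_not_fixed hn hθ
    have := hc ⟨t * z.a, 0⟩
    rw [mul_def, mul_def] at this
    have hb := congrArg SuzukiA.b this
    simp only at hb
    -- hb : t*z.a's ... 
    have key : t * z.a * θ z.a = z.a * θ (t * z.a) := by linear_combination hb
    rw [map_mul] at key
    have hθa : θ z.a ≠ 0 := fun h0 => ha (θ.injective (by simpa using h0))
    have hna : z.a * θ z.a ≠ 0 := mul_ne_zero ha hθa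
    apply ht
    apply mul_right_cancel₀ hna
    linear_combination key + (θ t * z.a * θ z.a - t * z.a * θ z.a) * h2
  · intro ha g
    ext
    · show g.a + z.a = z.a + g.a; ring
    · show g.b + z.b + g.a * θ z.a = z.b + g.b + z.a * θ g.a
      rw [ha]; simp; ring

theorem ker_iff (hθ : ∀ σ : Fq n ≃+* Fq n, σ ∈ Subgroup.zpowers θ)
    (w : Fq n) (hw : w ≠ 0) (c : Fq n) :
    phi (θ := θ) w c = 0 ↔ c = 0 ∨ c = w := by
  have h2 : (2 : Fq n) = 0 := two_eq_zero
  constructor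
  · intro hc
    simp only [phi_apply] at hc
    have heq : w * θ c = c * θ w := by linear_combination hc - (c * θ w) * h2
    have hθw : θ w ≠ 0 := fun h0 => hw (θ.injective (by simpa using h0))
    have hc' : θ c = c * θ w * w⁻¹ := by
      field_simp
      linear_combination heq
    have hfix : θ (c * w⁻¹) = c * w⁻¹ := by
      rw [map_mul, map_inv₀, hc']
      field_simp
    rcases fixed_eq hθ _ hfix with h | h
    · left
      rcases mul_eq_zero.mp h with h | h
      · exact h
      · exact absurd (inv_eq_zero.mp h) hw
    · right
      field_simp at h
      exact h
  · rintro (rfl | rfl)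
    · simp
    · simp only [phi_apply]
      linear_combination (c * θ c) * h2

def HsubEquivRange (x : SuzukiA n θ) : Hsub x ≃ (phi (θ := θ) x.a).range where
  toFun z := ⟨z.1.b, by
    obtain ⟨c, hc⟩ := (mem_comm_set_iff x z.1).mp z.2
    exact ⟨c, by rw [hc]⟩⟩
  invFun k := ⟨⟨0, k.1⟩, by
    obtain ⟨c, hc⟩ := k.2
    exact (mem_comm_set_iff x _).mpr ⟨c, by rw [hc]⟩⟩
  left_inv z := by
    obtain ⟨c, hc⟩ := (mem_comm_set_iff x z.1).mp z.2
    apply Subtype.ext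
    ext
    · show (0 : Fq n) = z.1.a
      rw [hc]
    · rfl
  right_inv k := rfl

def centerEquiv (hn : 1 < n) (hθ : ∀ σ : Fq n ≃+* Fq n, σ ∈ Subgroup.zpowers θ) :
    Subgroup.center (SuzukiA n θ) ≃ Fq n where
  toFun z := z.1.b
  invFun b := ⟨⟨0, b⟩, (center_iff hn hθ _).mpr rfl⟩
  left_inv z := by
    apply Subtype.ext
    ext
    · exact ((center_iff hn hθ _).mp z.2).symm
    · rfl
  right_inv b := rfl

theorem card_ker (hθ : ∀ σ : Fq n ≃+* Fq n, σ ∈ Subgroup.zpowers θ)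
    (w : Fq n) (hw : w ≠ 0) : Nat.card ((phi (θ := θ) w).ker) = 2 := by
  have hset : ((phi (θ := θ) w).ker : Set (Fq n)) = {0, w} := by
    ext c
    simp only [SetLike.mem_coe, AddMonoidHom.mem_ker, ker_iff hθ w hw c, Set.mem_insert_iff,
      Set.mem_singleton_iff]
  have h1 : Nat.card ((phi (θ := θ) w).ker) = Set.ncard ({0, w} : Set (Fq n)) := by
    rw [← hset]
    exact Nat.card_coe_set_eq _
  rw [h1, Set.ncard_pair (Ne.symm hw)]

end SuzukiAProof

open SuzukiAProof

open SuzukiA in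
theorem stmt9 (n : ℕ) (hn : 1 < n) (hodd : Odd n) (θ : Fq n ≃+* Fq n)
    (hθ : ∀ σ : Fq n ≃+* Fq n, σ ∈ Subgroup.zpowers θ)
    (x : SuzukiA n θ) (hx : x ∉ Subgroup.center (SuzukiA n θ)) :
    (↑(Subgroup.closure {z : SuzukiA n θ | ∃ g, z = x⁻¹ * g⁻¹ * x * g}) =
      {z : SuzukiA n θ | ∃ g, z = x⁻¹ * g⁻¹ * x * g}) ∧
    Subgroup.closure {z : SuzukiA n θ | ∃ g, z = x⁻¹ * g⁻¹ * x * g} ≤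
      Subgroup.center (SuzukiA n θ) ∧
    (Subgroup.closure {z : SuzukiA n θ | ∃ g, z = x⁻¹ * g⁻¹ * x * g}).relIndex
      (Subgroup.center (SuzukiA n θ)) = 2 := by
  have ha : x.a ≠ 0 := fun h => hx ((center_iff hn hθ x).mpr h)
  have hcl : Subgroup.closure {z : SuzukiA n θ | ∃ g, z = x⁻¹ * g⁻¹ * x * g} = Hsub x := by
    apply le_antisymm
    · exact (Subgroup.closure_le _).mpr (fun z hz => hz)
    · exact fun z hz => Subgroup.subset_closure hz
  have hle : Hsub x ≤ Subgroup.center (SuzukiA n θ) := by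
    intro z hz
    obtain ⟨c, rfl⟩ := (mem_comm_set_iff x z).mp hz
    exact (center_iff hn hθ _).mpr rfl
  refine ⟨?_, ?_, ?_⟩
  · rw [hcl]; rfl
  · rw [hcl]; exact hle
  · rw [hcl]
    show ((Hsub x).subgroupOf (Subgroup.center (SuzukiA n θ))).index = 2
    have h1 : Nat.card ((Hsub x).subgroupOf (Subgroup.center (SuzukiA n θ))) =
        Nat.card ((phi (θ := θ) x.a).range) :=
      (Nat.card_congr (Subgroup.subgroupOfEquivOfLe hle).toEquiv).trans
        (Nat.card_congr (HsubEquivRange x))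
    have h2 : Nat.card (Subgroup.center (SuzukiA n θ)) = Nat.card (Fq n) :=
      Nat.card_congr (centerEquiv hn hθ)
    have hq : Nat.card (Fq n) =
        Nat.card (Fq n ⧸ (phi (θ := θ) x.a).ker) * Nat.card ((phi (θ := θ) x.a).ker) :=
      AddSubgroup.card_eq_card_quotient_mul_card_addSubgroup _
    have he : Nat.card (Fq n ⧸ (phi (θ := θ) x.a).ker) = Nat.card ((phi (θ := θ) x.a).range) :=
      Nat.card_congr (QuotientAddGroup.quotientKerEquivRange (phi (θ := θ) x.a)).toEquiv
    have hker := card_ker hθ x.a ha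
    have hmi := Subgroup.card_mul_index ((Hsub x).subgroupOf (Subgroup.center (SuzukiA n θ)))
    rw [h1, h2, hq, he, hker] at hmi
    have hpos : 0 < Nat.card ((phi (θ := θ) x.a).range) := Nat.card_pos
    exact Nat.eq_of_mul_eq_mul_left hpos hmi
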